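/- arXiv:1901.04924 — 6 statements merged into one kernel-verified Lean document; each statement's English description precedes it below -/
import Mathlib

section
/- The Lax-Friedrichs wall boundary flux satisfies the entropy inequality: for all real Ma, Ma·(1 + γ·Ma·(Ma + |Ma| + 1) − 1) ≥ 0. -/
/-- The Lax-Friedrichs wall boundary flux satisfies the entropy inequality. -/
theorem lf_entropy_stable (γ : ℝ) (hγ : 0 < γ) (Ma : ℝ) :
    0 ≤ Ma * (1 + γ * Ma * (Ma + |Ma| + 1) - 1) := by
  have h1 : 0 ≤ Ma + |Ma| := by cases abs_cases Ma with
    | inl h => linarith [h.1]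
    | inr h => linarith [h.1]
  nlinarith [sq_nonneg Ma, mul_nonneg (mul_nonneg hγ.le (sq_nonneg Ma)) h1]
end

section
/- The Roe wall boundary flux pressure ratio r(Ma) = 1 + γ·Ma·(Ma + √(1 + ((γ−1)/2)·Ma²)) satisfies the entropy inequality Ma·(r(Ma) − 1) ≥ 0 if and only if Ma ≥ −√(2/(3−γ)), assuming 1 < γ < 3. -/
/-- The Roe wall flux satisfies the entropy inequality iff `Ma ≥ −√(2/(3−γ))`. -/
theorem roe_entropy_stable_iff (γ : ℝ) (hγ : 1 < γ) (hγ3 : γ < 3) (Ma : ℝ) :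
    0 ≤ Ma * ((1 + γ * Ma * (Ma + Real.sqrt (1 + ((γ - 1) / 2) * Ma ^ 2))) - 1) ↔
      -Real.sqrt (2 / (3 - γ)) ≤ Ma := by
  set s := Real.sqrt (1 + ((γ - 1) / 2) * Ma ^ 2) with hs
  have harg : (0:ℝ) ≤ 1 + ((γ - 1) / 2) * Ma ^ 2 := by nlinarith [sq_nonneg Ma]
  have hs2 : s ^ 2 = 1 + ((γ - 1) / 2) * Ma ^ 2 := Real.sq_sqrt harg
  have hsnn : 0 ≤ s := Real.sqrt_nonneg _
  have h3 : (0:ℝ) < 3 - γ := by linarith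
  have hc : (0:ℝ) < 2 / (3 - γ) := by positivity
  have hcsq : Real.sqrt (2 / (3 - γ)) ^ 2 = 2 / (3 - γ) := Real.sq_sqrt hc.le
  have hcnn : 0 ≤ Real.sqrt (2 / (3 - γ)) := Real.sqrt_nonneg _
  have key : 0 ≤ Ma * ((1 + γ * Ma * (Ma + s)) - 1) ↔ 0 ≤ Ma + s := by
    constructor
    · intro h
      rcases eq_or_ne Ma 0 with hMa | hMa
      · simpa [hMa] using hsnn
      · have hM2 : 0 < γ * Ma ^ 2 := by positivity
        nlinarith
    · intro h
      nlinarith [mul_nonneg (mul_nonneg (by linarith : (0:ℝ) ≤ γ) (sq_nonneg Ma)) h]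
  rw [key]
  constructor
  · intro h
    rcases le_or_gt 0 Ma with hM | hM
    · linarith
    · have hss : s ^ 2 ≥ Ma ^ 2 := by nlinarith
      have hMa2 : Ma ^ 2 ≤ 2 / (3 - γ) := by
        rw [hs2] at hss
        rw [le_div_iff₀ h3]
        nlinarith
      have : -Ma ≤ Real.sqrt (2 / (3 - γ)) := by
        rw [Real.le_sqrt (by linarith : (0:ℝ) ≤ -Ma)]
        · nlinarith
        · exact hc.le
      linarith
  · intro h
    rcases le_or_gt 0 Ma with hM | hM
    · linarith
    · have hMa2 : Ma ^ 2 ≤ 2 / (3 - γ) := by nlinarith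
      have hss : Ma ^ 2 ≤ s ^ 2 := by
        rw [hs2]
        rw [le_div_iff₀ h3] at hMa2
        nlinarith
      nlinarith
end

section
/- For γ = 7/5, the Roe wall boundary flux fails the entropy inequality exactly for Ma < −√(5/4); in particular there exists Ma with −2 < Ma < −1 for which Ma·(r(Ma) − 1) < 0. -/
/-- For `γ = 7/5` the Roe wall flux fails the entropy inequality exactly for
`Ma < −√(5/4)`; in particular it fails for some `Ma ∈ (−2, −1)`. -/
theorem roe_entropy_failure :
    (∀ Ma : ℝ,
      Ma * ((1 + (7/5 : ℝ) * Ma * (Ma + Real.sqrt (1 + (((7/5 : ℝ) - 1) / 2) * Ma ^ 2))) - 1) < 0 ↔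
        Ma < -Real.sqrt (5/4)) ∧
    ∃ Ma : ℝ, -2 < Ma ∧ Ma < -1 ∧
      Ma * ((1 + (7/5 : ℝ) * Ma * (Ma + Real.sqrt (1 + (((7/5 : ℝ) - 1) / 2) * Ma ^ 2))) - 1) < 0 := by
  have key : ∀ Ma : ℝ,
      Ma * ((1 + (7/5 : ℝ) * Ma * (Ma + Real.sqrt (1 + (((7/5 : ℝ) - 1) / 2) * Ma ^ 2))) - 1) < 0 ↔
        Ma < -Real.sqrt (5/4) := by
    intro Ma
    set s := Real.sqrt (1 + (((7/5 : ℝ) - 1) / 2) * Ma ^ 2) with hs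
    have hsnn : 0 ≤ s := Real.sqrt_nonneg _
    have hsq : s ^ 2 = 1 + (1/5) * Ma ^ 2 := by
      rw [hs, Real.sq_sqrt (by nlinarith [sq_nonneg Ma])]; ring
    set t := Real.sqrt (5/4) with ht
    have htnn : 0 ≤ t := Real.sqrt_nonneg _
    have htsq : t ^ 2 = 5/4 := Real.sq_sqrt (by norm_num)
    constructor
    · intro h
      have hMa : Ma ≠ 0 := by rintro rfl; norm_num at h
      have h1 : Ma + s < 0 := by nlinarith [sq_nonneg Ma, sq_nonneg s]
      have hMneg : Ma < 0 := by nlinarith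
      have h2 : Ma ^ 2 > t ^ 2 := by nlinarith
      nlinarith [sq_nonneg (Ma + t)]
    · intro h
      have hMneg : Ma < 0 := by nlinarith
      have h2 : Ma ^ 2 > t ^ 2 := by nlinarith
      have h1 : Ma + s < 0 := by nlinarith
      nlinarith [sq_nonneg Ma, mul_pos (mul_pos (mul_pos (mul_pos_of_neg_of_neg hMneg hMneg) (by norm_num : (0:ℝ) < 7/5)) (neg_pos.mpr h1)) (by norm_num : (0:ℝ) < 1)]
  refine ⟨key, -3/2, by norm_num, by norm_num, ?_⟩
  rw [key]
  have : Real.sqrt (5/4) < 3/2 := by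
    rw [show (5/4 : ℝ) = (5/4 : ℝ) from rfl]
    nlinarith [Real.sq_sqrt (show (0:ℝ) ≤ 5/4 by norm_num), Real.sqrt_nonneg (5/4 : ℝ)]
  linarith
end

section
/- For the symmetric 5×5 matrix A_n = b(e₁nᵀ + neᵀ₁) + a(e₅nᵀ + neᵀ₅) (embedded appropriately, with n a unit vector in the velocity slots), the quadratic form of its matrix absolute value satisfies Uᵀ|A_n|U = (1/c̄)·Q² + c̄·V_n², where c̄ = √(a² + b²), Q = b·ρ' + a·P', and V_n = V·n. -/
open Matrix

set_option maxHeartbeats 1600000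

private lemma psd_smul {M : Matrix (Fin 5) (Fin 5) ℝ} (hM : M.PosSemidef) {c : ℝ}
    (hc : 0 ≤ c) : (c • M).PosSemidef := by
  refine ⟨?_, fun x => ?_⟩
  · unfold Matrix.IsHermitian
    rw [conjTranspose_smul, hM.1]
    simp
  · exact (hM.smul hc).2 x

/-- For the wall normal coefficient matrix `A_n` of the symmetrized linearized
Euler equations, the quadratic form of the matrix absolute value `|A_n|`
(the positive semidefinite square root of `A_n²`) satisfies
`Uᵀ|A_n|U = Q²/c̄ + c̄·V_n²` with `c̄ = √(a²+b²)`, `Q = bρ' + aP'`. -/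
theorem abs_An_quadratic_form (a b : ℝ) (ha : 0 < a) (hb : 0 < b)
    (n : Fin 3 → ℝ) (hn : n 0 ^ 2 + n 1 ^ 2 + n 2 ^ 2 = 1)
    (ρ' P' : ℝ) (V : Fin 3 → ℝ)
    (Vn : ℝ) (hVn : Vn = V 0 * n 0 + V 1 * n 1 + V 2 * n 2)
    (cbar : ℝ) (hcbar : cbar = Real.sqrt (a ^ 2 + b ^ 2))
    (Q : ℝ) (hQ : Q = b * ρ' + a * P')
    (An : Matrix (Fin 5) (Fin 5) ℝ)
    (hAn : An = !![0, n 0 * b, n 1 * b, n 2 * b, 0;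
                   n 0 * b, 0, 0, 0, n 0 * a;
                   n 1 * b, 0, 0, 0, n 1 * a;
                   n 2 * b, 0, 0, 0, n 2 * a;
                   0, n 0 * a, n 1 * a, n 2 * a, 0])
    (absAn : Matrix (Fin 5) (Fin 5) ℝ)
    (habs : absAn.PosSemidef ∧ absAn * absAn = An * An)
    (U : Fin 5 → ℝ) (hU : U = ![ρ', V 0, V 1, V 2, P']) :
    U ⬝ᵥ (absAn *ᵥ U) = (1 / cbar) * Q ^ 2 + cbar * Vn ^ 2 := by
  have hab : (0:ℝ) < a ^ 2 + b ^ 2 := by positivity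
  have hcpos : 0 < cbar := by rw [hcbar]; positivity
  have hc2 : cbar ^ 2 = a ^ 2 + b ^ 2 := by rw [hcbar]; exact Real.sq_sqrt hab.le
  have hcne : cbar ≠ 0 := hcpos.ne'
  -- key cubic identity
  have h3 : An * An * An = (a ^ 2 + b ^ 2) • An := by
    subst hAn
    ext i j
    fin_cases i <;> fin_cases j <;>
      simp [Matrix.mul_apply, Fin.sum_univ_five]
    · linear_combination ((a ^ 2 + b ^ 2) * (n 0 * b)) * hn
    · linear_combination ((a ^ 2 + b ^ 2) * (n 1 * b)) * hn
    · linear_combination ((a ^ 2 + b ^ 2) * (n 2 * b)) * hn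
    · linear_combination ((a ^ 2 + b ^ 2) * (n 0 * b)) * hn
    · linear_combination ((a ^ 2 + b ^ 2) * (n 0 * a)) * hn
    · linear_combination ((a ^ 2 + b ^ 2) * (n 1 * b)) * hn
    · linear_combination ((a ^ 2 + b ^ 2) * (n 1 * a)) * hn
    · linear_combination ((a ^ 2 + b ^ 2) * (n 2 * b)) * hn
    · linear_combination ((a ^ 2 + b ^ 2) * (n 2 * a)) * hn
    · linear_combination ((a ^ 2 + b ^ 2) * (n 0 * a)) * hn
    · linear_combination ((a ^ 2 + b ^ 2) * (n 1 * a)) * hn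
    · linear_combination ((a ^ 2 + b ^ 2) * (n 2 * a)) * hn
  -- An is symmetric
  have hsym : Anᴴ = An := by
    subst hAn
    ext i j
    fin_cases i <;> fin_cases j <;> simp [Matrix.conjTranspose_apply]
  set M : Matrix (Fin 5) (Fin 5) ℝ := cbar⁻¹ • (An * An) with hM
  have hMpsd : M.PosSemidef := by
    refine psd_smul ?_ (by positivity)
    have := Matrix.posSemidef_conjTranspose_mul_self An
    rwa [hsym] at this
  have hMsq : M ^ 2 = absAn ^ 2 := by
    rw [pow_two, pow_two, habs.2, hM]
    rw [Matrix.smul_mul, Matrix.mul_smul, smul_smul]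
    have : An * An * (An * An) = (a ^ 2 + b ^ 2) • (An * An) := by
      rw [← Matrix.mul_assoc, h3, Matrix.smul_mul]
    rw [this, smul_smul]
    have : cbar⁻¹ * cbar⁻¹ * (a ^ 2 + b ^ 2) = 1 := by
      rw [← hc2]
      field_simp
    rw [this, one_smul]
  have hMeq : absAn = M := by
    open scoped MatrixOrder in
    calc absAn = CFC.sqrt (absAn ^ 2) := (CFC.sqrt_sq absAn habs.1.nonneg).symm
      _ = CFC.sqrt (M ^ 2) := by rw [hMsq]
      _ = M := CFC.sqrt_sq M hMpsd.nonneg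
  have key : U ⬝ᵥ ((An * An) *ᵥ U) = Q ^ 2 + cbar ^ 2 * Vn ^ 2 := by
    subst hAn hU hQ hVn
    simp [Matrix.mulVec, dotProduct, Fin.sum_univ_five, Matrix.mul_apply]
    linear_combination ((b * ρ' + a * P') ^ 2) * hn -
      ((V 0 * n 0 + V 1 * n 1 + V 2 * n 2) ^ 2) * hc2
  rw [hMeq, hM, smul_mulVec, dotProduct_smul, smul_eq_mul, key]
  field_simp
end

section
/- Given the Euler entropy variables W = ((γ−ς)/(γ−1) − β||V||², 2βV, −2β) with β = ρ/(2P), ς = ln P − γ ln ρ, the entropy-stability boundary term for the wall flux F* = (0, P*·n, 0) simplifies to ρ·V_n·(P*/P − 1); i.e., Wᵀ(F* − F·n) + f^s·n = ρ·V_n·(P*/P − 1), where F·n = (ρV_n, ρV_n V + P n, (ρE+P)V_n) and f^s·n = −ρς V_n/(γ−1). -/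
open Matrix

/-- The entropy-stability boundary term for the Euler slip-wall flux
`F* = (0, P*·n, 0)` simplifies to `ρ·V_n·(P*/P − 1)`:
`Wᵀ(F* − F·n) + f^s·n = ρ·V_n·(P*/P − 1)`. -/
theorem wall_entropy_boundary_term (γ ρ P Pstar : ℝ) (hγ : 1 < γ)
    (hρ : 0 < ρ) (hP : 0 < P)
    (n : Fin 3 → ℝ) (hn : n 0 ^ 2 + n 1 ^ 2 + n 2 ^ 2 = 1)
    (V : Fin 3 → ℝ)
    (Vn : ℝ) (hVn : Vn = V 0 * n 0 + V 1 * n 1 + V 2 * n 2)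
    (rhoE : ℝ)
    (hE : P = (γ - 1) * (rhoE - (1 / 2) * ρ * (V 0 ^ 2 + V 1 ^ 2 + V 2 ^ 2)))
    (ς : ℝ) (hς : ς = Real.log P - γ * Real.log ρ)
    (β : ℝ) (hβ : β = ρ / (2 * P))
    (W : Fin 5 → ℝ)
    (hW : W = ![(γ - ς) / (γ - 1) - β * (V 0 ^ 2 + V 1 ^ 2 + V 2 ^ 2),
                2 * β * V 0, 2 * β * V 1, 2 * β * V 2, -2 * β])
    (Fstar Fn : Fin 5 → ℝ)
    (hFstar : Fstar = ![0, Pstar * n 0, Pstar * n 1, Pstar * n 2, 0])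
    (hFn : Fn = ![ρ * Vn, ρ * Vn * V 0 + P * n 0, ρ * Vn * V 1 + P * n 1,
                  ρ * Vn * V 2 + P * n 2, (rhoE + P) * Vn])
    (fs : ℝ) (hfs : fs = -(ρ * ς * Vn) / (γ - 1)) :
    W ⬝ᵥ (Fstar - Fn) + fs = ρ * Vn * (Pstar / P - 1) := by
  subst hW hFstar hFn hfs hβ hVn
  have hγ' : γ - 1 ≠ 0 := by linarith
  have hP' : P ≠ 0 := ne_of_gt hP
  simp [dotProduct, Fin.sum_univ_five, Matrix.cons_val_zero, Matrix.cons_val_one]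
  have hrhoE : rhoE = P / (γ - 1) + 1 / 2 * ρ * (V 0 ^ 2 + V 1 ^ 2 + V 2 ^ 2) := by
    field_simp at hE ⊢; linarith
  subst hrhoE
  field_simp
  ring
end

section
/- All the entropy-stable wall pressure ratios agree to first order in the normal Mach number: r_LF, r_HLL, r_EC-LF, r_Roe, and the exact Riemann problem ratio r_RP all satisfy r(Ma) = 1 + γ·Ma + O(Ma²) as Ma → 0; equivalently, each has derivative γ at Ma = 0 (one-sided derivatives where the formula is piecewise). -/
lemma mul_abs_hasDerivAt_zero : HasDerivAt (fun x : ℝ => x * |x|) 0 0 := by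
  rw [hasDerivAt_iff_tendsto_slope]
  have h : Filter.Tendsto (fun x : ℝ => |x|) (nhdsWithin 0 {(0:ℝ)}ᶜ) (nhds 0) := by
    simpa using (continuous_abs.tendsto (0:ℝ)).mono_left nhdsWithin_le_nhds
  refine h.congr' ?_
  filter_upwards [self_mem_nhdsWithin] with x hx
  have hx0 : x ≠ 0 := hx
  rw [slope_def_field]
  field_simp [slope, hx0]
  ring

lemma sqrt_comp_hasDerivAt (c : ℝ) :
    HasDerivAt (fun x : ℝ => Real.sqrt (1 + c * x ^ 2)) 0 0 := by
  have hinner : HasDerivAt (fun x : ℝ => 1 + c * x ^ 2) 0 0 := by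
    have := ((hasDerivAt_pow 2 (0:ℝ)).const_mul c).const_add 1
    simpa using this
  have hs : HasDerivAt Real.sqrt (1 / (2 * Real.sqrt (1 + c * 0 ^ 2))) (1 + c * 0 ^ 2) := by
    apply Real.hasDerivAt_sqrt
    norm_num
  have := hs.comp 0 hinner
  simpa [Function.comp_def] using this

/-- All the wall pressure ratios agree to first order in the normal Mach number:
`r_LF`, `r_HLL`, `r_EC-LF`, `r_Roe` and the exact Riemann problem ratio `r_RP`
all have derivative `γ` at `Ma = 0` (one-sided derivatives for the piecewise
defined `r_RP`), i.e. `r(Ma) = 1 + γ·Ma + O(Ma²)` as `Ma → 0`. -/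
theorem wall_pressure_ratios_first_order (γ : ℝ) (hγ : 1 < γ)
    (rLF rHLL rECLF rRoe rRP : ℝ → ℝ)
    (hLF : rLF = fun Ma => 1 + γ * Ma * (Ma + |Ma| + 1))
    (hHLL : rHLL = fun Ma => 1 + γ * Ma)
    (hECLF : rECLF = fun Ma => 1 + γ * Ma * (|Ma| + 1))
    (hRoe : rRoe = fun Ma => 1 + γ * Ma * (Ma + Real.sqrt (1 + ((γ - 1) / 2) * Ma ^ 2)))
    (hRP : rRP = fun Ma => if 0 < Ma then
        1 + γ * Ma * (((γ + 1) / 4) * Ma + Real.sqrt ((((γ + 1) / 4) * Ma) ^ 2 + 1))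
      else (1 + ((γ - 1) / 2) * Ma) ^ (2 * γ / (γ - 1))) :
    HasDerivAt rLF γ 0 ∧ HasDerivAt rHLL γ 0 ∧ HasDerivAt rECLF γ 0 ∧
    HasDerivAt rRoe γ 0 ∧
    HasDerivWithinAt rRP γ (Set.Ici 0) 0 ∧ HasDerivWithinAt rRP γ (Set.Iic 0) 0 := by
  subst hLF hHLL hECLF hRoe hRP
  have hid : HasDerivAt (fun x : ℝ => x) 1 (0:ℝ) := hasDerivAt_id 0
  have hx2 : HasDerivAt (fun x : ℝ => x * x) 0 (0:ℝ) := by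
    simpa [Pi.mul_def] using hid.mul hid
  have habs := mul_abs_hasDerivAt_zero
  refine ⟨?_, ?_, ?_, ?_, ?_, ?_⟩
  · -- LF
    have h : HasDerivAt (fun x : ℝ => 1 + γ * (x * x + x * |x| + x))
        (γ * (0 + 0 + 1)) 0 := (((hx2.add habs).add hid).const_mul γ).const_add 1
    convert h using 2 with x
    · ring
    · ring
  · -- HLL
    simpa using (hid.const_mul γ).const_add 1
  · -- EC-LF
    have h : HasDerivAt (fun x : ℝ => 1 + γ * (x * |x| + x))
        (γ * (0 + 1)) 0 := ((habs.add hid).const_mul γ).const_add 1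
    convert h using 2 with x
    · ring
    · ring
  · -- Roe
    have hs := sqrt_comp_hasDerivAt ((γ - 1) / 2)
    have hg : HasDerivAt (fun x : ℝ => x + Real.sqrt (1 + (γ - 1) / 2 * x ^ 2)) 1 0 := by
      simpa [Pi.add_def] using hid.add hs
    have hprod : HasDerivAt
        (fun x : ℝ => x * (x + Real.sqrt (1 + (γ - 1) / 2 * x ^ 2)))
        (1 * (0 + Real.sqrt (1 + (γ - 1) / 2 * 0 ^ 2)) + 0 * 1) 0 := hid.mul hg
    have h : HasDerivAt
        (fun x : ℝ => 1 + γ * (x * (x + Real.sqrt (1 + (γ - 1) / 2 * x ^ 2))))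
        (γ * (1 * (0 + Real.sqrt (1 + (γ - 1) / 2 * 0 ^ 2)) + 0 * 1)) 0 :=
      (hprod.const_mul γ).const_add 1
    convert h using 2 with x
    · ring
    · simp [Real.sqrt_one]
  · -- RP on Ici 0
    set a : ℝ := (γ + 1) / 4 with ha
    have hs : HasDerivAt (fun x : ℝ => Real.sqrt ((a * x) ^ 2 + 1)) 0 0 := by
      have := sqrt_comp_hasDerivAt (a ^ 2)
      convert this using 2 with x
      ring
    have hg : HasDerivAt (fun x : ℝ => a * x + Real.sqrt ((a * x) ^ 2 + 1)) a 0 := by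
      simpa [Pi.add_def] using (hid.const_mul a).add hs
    have hprod : HasDerivAt
        (fun x : ℝ => x * (a * x + Real.sqrt ((a * x) ^ 2 + 1)))
        (1 * (a * 0 + Real.sqrt ((a * 0) ^ 2 + 1)) + 0 * a) 0 := hid.mul hg
    have h : HasDerivAt
        (fun x : ℝ => 1 + γ * (x * (a * x + Real.sqrt ((a * x) ^ 2 + 1))))
        (γ * (1 * (a * 0 + Real.sqrt ((a * 0) ^ 2 + 1)) + 0 * a)) 0 :=
      (hprod.const_mul γ).const_add 1
    have h' : HasDerivAt
        (fun x : ℝ => 1 + γ * x * (a * x + Real.sqrt ((a * x) ^ 2 + 1))) γ 0 := by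
      convert h using 2 with x
      · ring
      · simp [Real.sqrt_one]
    refine h'.hasDerivWithinAt.congr ?_ ?_
    · intro x hx
      rcases lt_or_eq_of_le (Set.mem_Ici.mp hx) with hx0 | hx0
      · simp [if_pos hx0]
      · simp [← hx0, Real.one_rpow]
    · simp [Real.one_rpow, Real.sqrt_one]
  · -- RP on Iic 0
    set b : ℝ := (γ - 1) / 2 with hb
    set p : ℝ := 2 * γ / (γ - 1) with hp
    have hγ1 : γ - 1 ≠ 0 := by linarith
    have hinner : HasDerivAt (fun x : ℝ => 1 + b * x) b 0 := by
      simpa using (hid.const_mul b).const_add 1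
    have h : HasDerivAt (fun x : ℝ => (1 + b * x) ^ p)
        (b * p * (1 + b * 0) ^ (p - 1)) 0 := by
      apply hinner.rpow_const
      left
      norm_num
    have h' : HasDerivAt (fun x : ℝ => (1 + b * x) ^ p) γ 0 := by
      convert h using 1
      rw [show (1 : ℝ) + b * 0 = 1 by ring, Real.one_rpow]
      rw [hb, hp]
      field_simp
    refine h'.hasDerivWithinAt.congr ?_ ?_
    · intro x hx
      have : ¬ (0 < x) := not_lt.mpr (Set.mem_Iic.mp hx)
      simp [if_neg this]
    · norm_num
end
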